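/- For every positive integer n, the sum over all permutations σ of [n] of (-1) raised to the sum of the number of left-to-right maxima and the number of right-to-left minima of σ equals 2^(⌊n/2⌋). (Hence this statistic exhibits the cyclic sieving phenomenon with respect to any involution on S_n with 2^(⌊n/2⌋) fixed points, such as the Alexandersson–Kebede map.) -/

import Mathlib

open Finset

namespace LRRL

open Equiv

variable {n : ℕ}

/-- The combined statistic: number of left-to-right maxima plus right-to-left minima. -/
def stat (N : ℕ) (σ : Equiv.Perm (Fin N)) : ℕ :=
  (univ.filter (fun i : Fin N => ∀ j : Fin N, j < i → σ j < σ i)).card +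
  (univ.filter (fun i : Fin N => ∀ j : Fin N, i < j → σ i < σ j)).card

/-- The signed sum. -/
def S (N : ℕ) : ℤ := ∑ σ : Equiv.Perm (Fin N), (-1) ^ stat N σ

lemma succsucc_val (i : Fin n) : ((i.succ.succ : Fin (n+2)) : ℕ) = (i : ℕ) + 2 := by
  simp [Fin.val_succ]

lemma cases2 (j : Fin (n+2)) : j = 0 ∨ j = 1 ∨ ∃ i : Fin n, j = i.succ.succ := by
  obtain ⟨v, hv⟩ := j
  match v with
  | 0 => exact Or.inl rfl
  | 1 => exact Or.inr (Or.inl rfl)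
  | (k+2) =>
    refine Or.inr (Or.inr ⟨⟨k, by omega⟩, ?_⟩)
    apply Fin.ext
    simp [Fin.val_succ]

lemma card_split (P : Fin (n+2) → Prop) [DecidablePred P] :
    (univ.filter P).card =
      (if P 0 then 1 else 0) + ((if P 1 then 1 else 0) +
        ∑ i : Fin n, if P i.succ.succ then 1 else 0) := by
  rw [Finset.card_filter, Fin.sum_univ_succ, Fin.sum_univ_succ]
  simp [Fin.succ_zero_eq_one]
  congr

lemma zero_lt_one' : (0 : Fin (n+2)) < 1 := by
  rw [Fin.lt_def]; simp

lemma zero_lt_succsucc (i : Fin n) : (0 : Fin (n+2)) < i.succ.succ := by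
  rw [Fin.lt_def]; rw [succsucc_val]; simp

lemma one_lt_succsucc (i : Fin n) : (1 : Fin (n+2)) < i.succ.succ := by
  rw [Fin.lt_def]; rw [succsucc_val]; simp

lemma succsucc_ne_zero (i : Fin n) : (i.succ.succ : Fin (n+2)) ≠ 0 := by
  intro h
  have := congrArg Fin.val h
  rw [succsucc_val] at this
  simp at this

lemma succsucc_ne_one (i : Fin n) : (i.succ.succ : Fin (n+2)) ≠ 1 := by
  intro h
  have := congrArg Fin.val h
  rw [succsucc_val] at this
  simp at this

lemma LP_one_iff (σ : Equiv.Perm (Fin (n+2))) :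
    (∀ j : Fin (n+2), j < 1 → σ j < σ 1) ↔ σ 0 < σ 1 := by
  constructor
  · intro h; exact h 0 zero_lt_one'
  · intro h j hj
    have hj0 : j = 0 := by
      apply Fin.ext
      have := (Fin.lt_def).mp hj
      simp at this ⊢
      omega
    rw [hj0]; exact h

lemma neg_one_pow_add_eq_zero {a b : ℕ} (h : Odd (a + b)) : (-1 : ℤ)^a + (-1 : ℤ)^b = 0 := by
  rcases Nat.even_or_odd a with ha | ha
  · have hb : Odd b := by
      rcases ha with ⟨x, hx⟩; rcases h with ⟨y, hy⟩; exact ⟨y - x, by omega⟩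
    rw [ha.neg_one_pow, hb.neg_one_pow]; ring
  · have hb : Even b := by
      rcases ha with ⟨x, hx⟩; rcases h with ⟨y, hy⟩; exact ⟨y - x, by omega⟩
    rw [ha.neg_one_pow, hb.neg_one_pow]; ring

section Cancel

variable (σ : Equiv.Perm (Fin (n+2)))

lemma tau_apply_succsucc (i : Fin n) :
    (σ * Equiv.swap 0 1 : Equiv.Perm (Fin (n+2))) i.succ.succ = σ i.succ.succ := by
  rw [Equiv.Perm.mul_apply,
    Equiv.swap_apply_of_ne_of_ne (succsucc_ne_zero i) (succsucc_ne_one i)]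

lemma stat_odd
    (hT : ¬(((σ 0 : Fin (n+2)) : ℕ) < 2 ∧ ((σ 1 : Fin (n+2)) : ℕ) < 2)) :
    Odd (stat (n+2) σ + stat (n+2) (σ * Equiv.swap 0 1)) := by
  set τ : Equiv.Perm (Fin (n+2)) := σ * Equiv.swap 0 1 with hτdef
  have hτ0 : τ 0 = σ 1 := by
    rw [hτdef, Equiv.Perm.mul_apply, Equiv.swap_apply_left]
  have hτ1 : τ 1 = σ 0 := by
    rw [hτdef, Equiv.Perm.mul_apply, Equiv.swap_apply_right]
  have hτI : ∀ i : Fin n, τ i.succ.succ = σ i.succ.succ := tau_apply_succsucc σ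
  have hne : σ 0 ≠ σ 1 := by
    intro h
    exact absurd (σ.injective h) (by simp [Fin.ext_iff])
  -- swap stays below succsucc indices
  have hswaplt : ∀ (i : Fin n) (j : Fin (n+2)), j < i.succ.succ →
      Equiv.swap (0 : Fin (n+2)) 1 j < i.succ.succ := by
    intro i j hj
    rcases cases2 j with rfl | rfl | ⟨k, rfl⟩
    · rw [Equiv.swap_apply_left]; exact one_lt_succsucc i
    · rw [Equiv.swap_apply_right]; exact zero_lt_succsucc i
    · rw [Equiv.swap_apply_of_ne_of_ne (succsucc_ne_zero k) (succsucc_ne_one k)]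
      exact hj
  -- tail L conditions agree
  have tailL : ∀ i : Fin n,
      (∀ j : Fin (n+2), j < i.succ.succ → τ j < τ i.succ.succ) ↔
      (∀ j : Fin (n+2), j < i.succ.succ → σ j < σ i.succ.succ) := by
    intro i
    constructor
    · intro h j hj
      have h2 := h (Equiv.swap 0 1 j) (hswaplt i j hj)
      rw [hτI] at h2
      rw [hτdef, Equiv.Perm.mul_apply, Equiv.swap_apply_self] at h2
      exact h2
    · intro h j hj
      have h2 := h (Equiv.swap 0 1 j) (hswaplt i j hj)
      rw [show σ (Equiv.swap 0 1 j) = τ j from by rw [hτdef, Equiv.Perm.mul_apply],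
        ← hτI i] at h2
      exact h2
  -- tail R conditions agree
  have tailR : ∀ i : Fin n,
      (∀ j : Fin (n+2), i.succ.succ < j → τ i.succ.succ < τ j) ↔
      (∀ j : Fin (n+2), i.succ.succ < j → σ i.succ.succ < σ j) := by
    intro i
    have key : ∀ j : Fin (n+2), i.succ.succ < j → τ j = σ j := by
      intro j hj
      rcases cases2 j with rfl | rfl | ⟨k, rfl⟩
      · exact absurd hj (by simp [Fin.lt_def])
      · exact absurd hj (by rw [Fin.lt_def, succsucc_val]; simp)
      · exact hτI k
    constructor
    · intro h j hj
      have h2 := h j hj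
      rw [key j hj, hτI] at h2; exact h2
    · intro h j hj
      rw [key j hj, hτI]; exact h j hj
  -- characterizations of R at 0 and 1
  have R0σ : (∀ j : Fin (n+2), 0 < j → σ 0 < σ j) ↔
      (σ 0 < σ 1 ∧ ∀ i : Fin n, σ 0 < σ i.succ.succ) := by
    constructor
    · intro h
      exact ⟨h 1 zero_lt_one', fun i => h i.succ.succ (zero_lt_succsucc i)⟩
    · rintro ⟨h1, h2⟩ j hj
      rcases cases2 j with rfl | rfl | ⟨k, rfl⟩
      · exact absurd hj (lt_irrefl _)
      · exact h1
      · exact h2 k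
  have R1σ : (∀ j : Fin (n+2), 1 < j → σ 1 < σ j) ↔
      (∀ i : Fin n, σ 1 < σ i.succ.succ) := by
    constructor
    · intro h i; exact h i.succ.succ (one_lt_succsucc i)
    · intro h j hj
      rcases cases2 j with rfl | rfl | ⟨k, rfl⟩
      · exact absurd hj (by simp [Fin.lt_def])
      · exact absurd hj (lt_irrefl _)
      · exact h k
  have R0τ : (∀ j : Fin (n+2), 0 < j → τ 0 < τ j) ↔
      (σ 1 < σ 0 ∧ ∀ i : Fin n, σ 1 < σ i.succ.succ) := by
    constructor
    · intro h
      refine ⟨?_, fun i => ?_⟩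
      · have := h 1 zero_lt_one'; rwa [hτ0, hτ1] at this
      · have := h i.succ.succ (zero_lt_succsucc i); rwa [hτ0, hτI] at this
    · rintro ⟨h1, h2⟩ j hj
      rcases cases2 j with rfl | rfl | ⟨k, rfl⟩
      · exact absurd hj (lt_irrefl _)
      · rw [hτ0, hτ1]; exact h1
      · rw [hτ0, hτI]; exact h2 k
  have R1τ : (∀ j : Fin (n+2), 1 < j → τ 1 < τ j) ↔
      (∀ i : Fin n, σ 0 < σ i.succ.succ) := by
    constructor
    · intro h i
      have := h i.succ.succ (one_lt_succsucc i); rwa [hτ1, hτI] at this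
    · intro h j hj
      rcases cases2 j with rfl | rfl | ⟨k, rfl⟩
      · exact absurd hj (by simp [Fin.lt_def])
      · exact absurd hj (lt_irrefl _)
      · rw [hτ1, hτI]; exact h k
  -- the two "smaller than all the tail" conditions cannot both hold
  have hK : (∀ i : Fin n, σ 0 < σ i.succ.succ) → (∀ i : Fin n, σ 1 < σ i.succ.succ) → False := by
    intro hA hB
    apply hT
    have hval : ∀ i : Fin n, 2 ≤ ((σ i.succ.succ : Fin (n+2)) : ℕ) := by
      intro i
      have h1 := (Fin.lt_def).mp (hA i)
      have h2 := (Fin.lt_def).mp (hB i)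
      have h3 : ((σ 0 : Fin (n+2)) : ℕ) ≠ ((σ 1 : Fin (n+2)) : ℕ) := by
        intro h; exact hne (Fin.ext h)
      omega
    have h0 : σ⁻¹ 0 = 0 ∨ σ⁻¹ 0 = 1 := by
      rcases cases2 (σ⁻¹ 0) with h | h | ⟨i, h⟩
      · exact Or.inl h
      · exact Or.inr h
      · exfalso
        have h2 : σ (σ⁻¹ 0) = 0 := Equiv.apply_symm_apply σ 0
        rw [h] at h2
        have := hval i
        rw [h2] at this
        simp at this
    have h1 : σ⁻¹ 1 = 0 ∨ σ⁻¹ 1 = 1 := by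
      rcases cases2 (σ⁻¹ 1) with h | h | ⟨i, h⟩
      · exact Or.inl h
      · exact Or.inr h
      · exfalso
        have h2 : σ (σ⁻¹ 1) = 1 := Equiv.apply_symm_apply σ 1
        rw [h] at h2
        have := hval i
        rw [h2] at this
        simp at this
    have e0 : σ 0 = 0 ∨ σ 1 = 0 := by
      rcases h0 with h | h
      · left; have := congrArg σ h; rw [Equiv.Perm.coe_inv, Equiv.apply_symm_apply] at this; exact this.symm
      · right; have := congrArg σ h; rw [Equiv.Perm.coe_inv, Equiv.apply_symm_apply] at this; exact this.symm
    have e1 : σ 0 = 1 ∨ σ 1 = 1 := by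
      rcases h1 with h | h
      · left; have := congrArg σ h; rw [Equiv.Perm.coe_inv, Equiv.apply_symm_apply] at this; exact this.symm
      · right; have := congrArg σ h; rw [Equiv.Perm.coe_inv, Equiv.apply_symm_apply] at this; exact this.symm
    rcases e0 with h | h <;> rcases e1 with h' | h'
    · rw [h] at h'
      exact absurd (congrArg Fin.val h') (by simp)
    · exact ⟨by rw [h]; simp, by rw [h']; simp⟩
    · exact ⟨by rw [h']; simp, by rw [h]; simp⟩
    · rw [h] at h'
      exact absurd (congrArg Fin.val h') (by simp)
  -- now compute
  rw [stat, stat, card_split, card_split, card_split, card_split]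
  -- rewrite all the pieces
  have vac0σ : (∀ j : Fin (n+2), j < 0 → σ j < σ 0) := fun j hj => absurd hj (Fin.not_lt_zero j)
  have vac0τ : (∀ j : Fin (n+2), j < 0 → τ j < τ 0) := fun j hj => absurd hj (Fin.not_lt_zero j)
  have L1τ : (∀ j : Fin (n+2), j < 1 → τ j < τ 1) ↔ σ 1 < σ 0 := by
    rw [LP_one_iff, hτ0, hτ1]
  simp only [LP_one_iff σ, if_pos vac0σ, if_pos vac0τ, L1τ, R0σ, R1σ, R0τ, R1τ]
  have tailLsum : (∑ i : Fin n, if (∀ j : Fin (n+2), j < i.succ.succ → τ j < τ i.succ.succ)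
      then 1 else 0) = ∑ i : Fin n, if (∀ j : Fin (n+2), j < i.succ.succ → σ j < σ i.succ.succ)
      then 1 else 0 := by
    apply Finset.sum_congr rfl
    intro i _
    simp only [tailL i]
  have tailRsum : (∑ i : Fin n, if (∀ j : Fin (n+2), i.succ.succ < j → τ i.succ.succ < τ j)
      then 1 else 0) = ∑ i : Fin n, if (∀ j : Fin (n+2), i.succ.succ < j → σ i.succ.succ < σ j)
      then 1 else 0 := by
    apply Finset.sum_congr rfl
    intro i _
    simp only [tailR i]
  rw [tailLsum, tailRsum]
  -- abbreviate
  set A := ∀ i : Fin n, σ 0 < σ i.succ.succ with hA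
  set B := ∀ i : Fin n, σ 1 < σ i.succ.succ with hB
  set TL := ∑ i : Fin n, if (∀ j : Fin (n+2), j < i.succ.succ → σ j < σ i.succ.succ) then 1 else 0
  set TR := ∑ i : Fin n, if (∀ j : Fin (n+2), i.succ.succ < j → σ i.succ.succ < σ j) then 1 else 0
  -- final parity argument by cases
  by_cases hAh : A <;> by_cases hBh : B
  · exact absurd hBh (fun h => hK hAh h)
  · -- A, ¬B: must have σ0 < σ1
    have hlt : σ 0 < σ 1 := by
      rcases lt_or_gt_of_ne hne with h | h
      · exact h
      · exact absurd (fun i => lt_trans h (hAh i)) hBh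
    rw [if_pos (show σ 0 < σ 1 ∧ A from ⟨hlt, hAh⟩), if_neg hBh, if_pos hlt,
      if_neg (not_lt.mpr hlt.le), if_neg (show ¬(σ 1 < σ 0 ∧ B) from fun h => hBh h.2),
      if_pos hAh]
    exact ⟨TL + TR + 2, by omega⟩
  · -- ¬A, B: must have σ1 < σ0
    have hlt : σ 1 < σ 0 := by
      rcases lt_or_gt_of_ne hne with h | h
      · exact absurd (fun i => lt_trans h (hBh i)) hAh
      · exact h
    rw [if_neg (show ¬(σ 0 < σ 1 ∧ A) from fun h => hAh h.2), if_pos hBh,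
      if_neg (not_lt.mpr hlt.le), if_pos hlt,
      if_pos (show σ 1 < σ 0 ∧ B from ⟨hlt, hBh⟩), if_neg hAh]
    exact ⟨TL + TR + 2, by omega⟩
  · rw [if_neg (show ¬(σ 0 < σ 1 ∧ A) from fun h => hAh h.2), if_neg hBh,
      if_neg (show ¬(σ 1 < σ 0 ∧ B) from fun h => hBh h.2), if_neg hAh]
    rcases lt_or_gt_of_ne hne with h | h
    · rw [if_pos h, if_neg (not_lt.mpr h.le)]
      exact ⟨TL + TR + 1, by omega⟩
    · rw [if_pos h, if_neg (not_lt.mpr h.le)]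
      exact ⟨TL + TR + 1, by omega⟩

end Cancel

lemma cancel_sum :
    ∑ σ ∈ univ.filter (fun σ : Equiv.Perm (Fin (n+2)) =>
      ¬(((σ 0 : Fin (n+2)) : ℕ) < 2 ∧ ((σ 1 : Fin (n+2)) : ℕ) < 2)),
      (-1 : ℤ) ^ stat (n+2) σ = 0 := by
  apply Finset.sum_involution (fun σ _ => σ * Equiv.swap 0 1)
  · intro σ hσ
    rw [Finset.mem_filter] at hσ
    exact neg_one_pow_add_eq_zero (stat_odd σ hσ.2)
  · intro σ _ _ h
    have h0 := congrArg (fun f : Equiv.Perm (Fin (n+2)) => f 0) h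
    simp only [Equiv.Perm.mul_apply, Equiv.swap_apply_left] at h0
    exact absurd (σ.injective h0) (by simp [Fin.ext_iff])
  · intro σ hσ
    rw [mul_assoc, Equiv.swap_mul_self, mul_one]
  · intro σ hσ
    rw [Finset.mem_filter] at hσ ⊢
    refine ⟨Finset.mem_univ _, ?_⟩
    have h0 : (σ * Equiv.swap 0 1 : Equiv.Perm (Fin (n+2))) 0 = σ 1 := by
      rw [Equiv.Perm.mul_apply, Equiv.swap_apply_left]
    have h1 : (σ * Equiv.swap 0 1 : Equiv.Perm (Fin (n+2))) 1 = σ 0 := by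
      rw [Equiv.Perm.mul_apply, Equiv.swap_apply_right]
    rw [h0, h1]
    tauto

/-! ### The structured part -/

def e (n : ℕ) : (Fin 2 ⊕ Fin n) ≃ Fin (n+2) :=
  finSumFinEquiv.trans (finCongr (Nat.add_comm 2 n))

lemma e_inl_val (i : Fin 2) : ((e n (Sum.inl i) : Fin (n+2)) : ℕ) = (i : ℕ) := by
  simp [e]

lemma e_inr_val (j : Fin n) : ((e n (Sum.inr j) : Fin (n+2)) : ℕ) = 2 + (j : ℕ) := by
  simp [e]
  omega

lemma e_inr_eq (j : Fin n) : e n (Sum.inr j) = j.succ.succ := by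
  apply Fin.ext
  rw [e_inr_val, succsucc_val]
  omega

lemma e_inl_zero : e n (Sum.inl 0) = 0 := by
  apply Fin.ext
  rw [e_inl_val]
  simp

lemma e_inl_one : e n (Sum.inl 1) = 1 := by
  apply Fin.ext
  rw [e_inl_val]
  simp

def E (ρ : Equiv.Perm (Fin 2)) (π : Equiv.Perm (Fin n)) : Equiv.Perm (Fin (n+2)) :=
  (e n).permCongr (Equiv.sumCongr ρ π)

lemma E_apply_inl (ρ : Equiv.Perm (Fin 2)) (π : Equiv.Perm (Fin n)) (i : Fin 2) :
    E ρ π (e n (Sum.inl i)) = e n (Sum.inl (ρ i)) := by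
  simp [E, Equiv.permCongr_apply]

lemma E_apply_inr (ρ : Equiv.Perm (Fin 2)) (π : Equiv.Perm (Fin n)) (j : Fin n) :
    E ρ π (e n (Sum.inr j)) = e n (Sum.inr (π j)) := by
  simp [E, Equiv.permCongr_apply]

lemma E_inj (ρ₁ ρ₂ : Equiv.Perm (Fin 2)) (π₁ π₂ : Equiv.Perm (Fin n))
    (h : E ρ₁ π₁ = E ρ₂ π₂) : ρ₁ = ρ₂ ∧ π₁ = π₂ := by
  have h' : Equiv.sumCongr ρ₁ π₁ = Equiv.sumCongr ρ₂ π₂ := (e n).permCongr.injective h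
  constructor
  · ext i
    have h2 : ρ₁ i = ρ₂ i := by
      have := congrArg (fun f : Equiv.Perm (Fin 2 ⊕ Fin n) => f (Sum.inl i)) h'
      simpa using this
    exact congrArg Fin.val h2
  · ext j
    have h2 : π₁ j = π₂ j := by
      have := congrArg (fun f : Equiv.Perm (Fin 2 ⊕ Fin n) => f (Sum.inr j)) h'
      simpa using this
    exact congrArg Fin.val h2


lemma pos_of_val_lt_two (x : Fin (n+2)) (h : (x : ℕ) < 2) : x = 0 ∨ x = 1 := by
  rcases cases2 x with h' | h' | ⟨i, h'⟩
  · exact Or.inl h'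
  · exact Or.inr h'
  · exfalso; rw [h', succsucc_val] at h; omega

lemma pos_of_two_le (x : Fin (n+2)) (h : 2 ≤ (x : ℕ)) :
    ∃ j : Fin n, x = e n (Sum.inr j) := by
  refine ⟨⟨(x : ℕ) - 2, by have := x.isLt; omega⟩, ?_⟩
  apply Fin.ext
  rw [e_inr_val]
  simp
  omega

lemma filter_eq_image :
    (univ.filter (fun σ : Equiv.Perm (Fin (n+2)) =>
      ((σ 0 : Fin (n+2)) : ℕ) < 2 ∧ ((σ 1 : Fin (n+2)) : ℕ) < 2)) =
    Finset.image (fun x : Equiv.Perm (Fin 2) × Equiv.Perm (Fin n) => E x.1 x.2) univ := by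
  ext σ
  simp only [Finset.mem_filter, Finset.mem_univ, true_and, Finset.mem_image, Prod.exists]
  constructor
  · rintro ⟨h0, h1⟩
    have hne : σ 0 ≠ σ 1 := by
      intro h
      exact absurd (σ.injective h) (by simp [Fin.ext_iff])
    have hvne : ((σ 0 : Fin (n+2)) : ℕ) ≠ ((σ 1 : Fin (n+2)) : ℕ) := fun h => hne (Fin.ext h)
    have hge : ∀ j : Fin n, 2 ≤ ((σ (e n (Sum.inr j)) : Fin (n+2)) : ℕ) := by
      intro j
      by_contra hc
      push_neg at hc
      have hne0 : ((σ (e n (Sum.inr j)) : Fin (n+2)) : ℕ) ≠ ((σ 0 : Fin (n+2)) : ℕ) := by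
        intro h
        have h2 := σ.injective (Fin.ext h)
        have h3 := congrArg Fin.val h2
        rw [e_inr_val] at h3
        simp only [Fin.val_zero] at h3
        omega
      have hne1 : ((σ (e n (Sum.inr j)) : Fin (n+2)) : ℕ) ≠ ((σ 1 : Fin (n+2)) : ℕ) := by
        intro h
        have h2 := σ.injective (Fin.ext h)
        have h3 := congrArg Fin.val h2
        rw [e_inr_val] at h3
        simp only [Fin.val_one] at h3
        omega
      omega
    have hlt2 : ∀ i : Fin 2, ((σ (e n (Sum.inl i)) : Fin (n+2)) : ℕ) < 2 := by
      intro i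
      rcases pos_of_val_lt_two (e n (Sum.inl i)) (by rw [e_inl_val]; exact i.isLt) with h | h
      · rw [h]; exact h0
      · rw [h]; exact h1
    -- injectivity of the candidate components
    have hρinj : Function.Injective
        (fun i : Fin 2 => (⟨((σ (e n (Sum.inl i)) : Fin (n+2)) : ℕ), hlt2 i⟩ : Fin 2)) := by
      intro a b hab
      have h2 := congrArg Fin.val hab
      simp only at h2
      have h3 := σ.injective (Fin.ext h2)
      have h4 := (e n).injective h3
      exact Sum.inl_injective h4
    have hπinj : Function.Injective
        (fun j : Fin n => (⟨((σ (e n (Sum.inr j)) : Fin (n+2)) : ℕ) - 2,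
          by have := hge j; have := (σ (e n (Sum.inr j))).isLt; omega⟩ : Fin n)) := by
      intro a b hab
      have h2 := congrArg Fin.val hab
      simp only at h2
      have ha := hge a
      have hb := hge b
      have h3 : ((σ (e n (Sum.inr a)) : Fin (n+2)) : ℕ) = ((σ (e n (Sum.inr b)) : Fin (n+2)) : ℕ) := by
        omega
      have h4 := σ.injective (Fin.ext h3)
      have h5 := (e n).injective h4
      exact Sum.inr_injective h5
    have hρbij := (Fintype.bijective_iff_injective_and_card _).mpr ⟨hρinj, rfl⟩
    have hπbij := (Fintype.bijective_iff_injective_and_card _).mpr ⟨hπinj, rfl⟩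
    refine ⟨Equiv.ofBijective _ hρbij, Equiv.ofBijective _ hπbij, ?_⟩
    apply Equiv.ext
    intro x
    rcases hy : (e n).symm x with i | j
    · have hx : x = e n (Sum.inl i) := by rw [← hy, Equiv.apply_symm_apply]
      rw [hx, E_apply_inl]
      apply Fin.ext
      rw [e_inl_val]
      rfl
    · have hx : x = e n (Sum.inr j) := by rw [← hy, Equiv.apply_symm_apply]
      rw [hx, E_apply_inr]
      apply Fin.ext
      rw [e_inr_val]
      have := hge j
      show 2 + (((σ (e n (Sum.inr j)) : Fin (n+2)) : ℕ) - 2) = _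
      omega
  · rintro ⟨ρ, π, rfl⟩
    constructor
    · have h : E ρ π 0 = e n (Sum.inl (ρ 0)) := by
        rw [← e_inl_zero, E_apply_inl]
      rw [h, e_inl_val]
      exact (ρ 0).isLt
    · have h : E ρ π 1 = e n (Sum.inl (ρ 1)) := by
        rw [← e_inl_one, E_apply_inl]
      rw [h, e_inl_val]
      exact (ρ 1).isLt

lemma stat_E (ρ : Equiv.Perm (Fin 2)) (π : Equiv.Perm (Fin n)) :
    (-1 : ℤ) ^ stat (n+2) (E ρ π) = (-1 : ℤ) ^ stat n π := by
  set σ := E ρ π with hσ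
  have v0 : σ 0 = e n (Sum.inl (ρ 0)) := by rw [hσ, ← e_inl_zero, E_apply_inl]
  have v1 : σ 1 = e n (Sum.inl (ρ 1)) := by rw [hσ, ← e_inl_one, E_apply_inl]
  have vI : ∀ i : Fin n, σ i.succ.succ = e n (Sum.inr (π i)) := by
    intro i
    rw [hσ, ← e_inr_eq, E_apply_inr]
  have val0 : ((σ 0 : Fin (n+2)) : ℕ) = ((ρ 0 : Fin 2) : ℕ) := by rw [v0, e_inl_val]
  have val1 : ((σ 1 : Fin (n+2)) : ℕ) = ((ρ 1 : Fin 2) : ℕ) := by rw [v1, e_inl_val]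
  have valI : ∀ i : Fin n, ((σ i.succ.succ : Fin (n+2)) : ℕ) = 2 + ((π i : Fin n) : ℕ) := by
    intro i
    rw [vI, e_inr_val]
  have hcmp : σ 0 < σ 1 ↔ ρ 0 < ρ 1 := by
    rw [Fin.lt_def, Fin.lt_def, val0, val1]
  have key : stat (n+2) σ = stat n π + (2 * (if ρ 0 < ρ 1 then 1 else 0) + 2) := by
    rw [stat, stat, card_split, card_split, Finset.card_filter, Finset.card_filter]
    have vac0 : (∀ j : Fin (n+2), j < 0 → σ j < σ 0) := fun j hj => absurd hj (Fin.not_lt_zero j)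
    have hR1p : (∀ j : Fin (n+2), 1 < j → σ 1 < σ j) := by
      intro j hj
      rcases cases2 j with rfl | rfl | ⟨k, rfl⟩
      · exact absurd hj (by simp [Fin.lt_def])
      · exact absurd hj (lt_irrefl _)
      · rw [Fin.lt_def, val1, valI]
        have := (ρ 1).isLt
        omega
    have hLI : ∀ i : Fin n,
        ((∀ j : Fin (n+2), j < i.succ.succ → σ j < σ i.succ.succ) ↔
         (∀ k : Fin n, k < i → π k < π i)) := by
      intro i
      constructor
      · intro h k hk
        have h2 := h k.succ.succ (by
          rw [Fin.lt_def, succsucc_val, succsucc_val]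
          have := (Fin.lt_def).mp hk
          omega)
        rw [Fin.lt_def, valI, valI] at h2
        rw [Fin.lt_def]
        omega
      · intro h j hj
        rcases cases2 j with rfl | rfl | ⟨k, rfl⟩
        · rw [Fin.lt_def, val0, valI]
          have := (ρ 0).isLt
          omega
        · rw [Fin.lt_def, val1, valI]
          have := (ρ 1).isLt
          omega
        · rw [Fin.lt_def, succsucc_val, succsucc_val] at hj
          have h2 := h k (by rw [Fin.lt_def]; omega)
          rw [Fin.lt_def, valI, valI]
          rw [Fin.lt_def] at h2
          omega
    have hR0 : (∀ j : Fin (n+2), 0 < j → σ 0 < σ j) ↔ ρ 0 < ρ 1 := by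
      constructor
      · intro h
        exact hcmp.mp (h 1 zero_lt_one')
      · intro h j hj
        rcases cases2 j with rfl | rfl | ⟨k, rfl⟩
        · exact absurd hj (lt_irrefl _)
        · exact hcmp.mpr h
        · rw [Fin.lt_def, val0, valI]
          have := (ρ 0).isLt
          omega
    have hRI : ∀ i : Fin n,
        ((∀ j : Fin (n+2), i.succ.succ < j → σ i.succ.succ < σ j) ↔
         (∀ k : Fin n, i < k → π i < π k)) := by
      intro i
      constructor
      · intro h k hk
        have h2 := h k.succ.succ (by
          rw [Fin.lt_def, succsucc_val, succsucc_val]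
          have := (Fin.lt_def).mp hk
          omega)
        rw [Fin.lt_def, valI, valI] at h2
        rw [Fin.lt_def]
        omega
      · intro h j hj
        rcases cases2 j with rfl | rfl | ⟨k, rfl⟩
        · exact absurd hj (by simp [Fin.lt_def, succsucc_val])
        · exact absurd hj (by rw [Fin.lt_def, succsucc_val]; simp)
        · rw [Fin.lt_def, succsucc_val, succsucc_val] at hj
          have h2 := h k (by rw [Fin.lt_def]; omega)
          rw [Fin.lt_def, valI, valI]
          rw [Fin.lt_def] at h2
          omega
    rw [if_pos vac0, if_pos hR1p]
    simp only [LP_one_iff σ, hcmp, hR0]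
    have hTL : (∑ i : Fin n, if (∀ j : Fin (n+2), j < i.succ.succ → σ j < σ i.succ.succ)
        then 1 else 0) = ∑ i : Fin n, if (∀ j : Fin n, j < i → π j < π i) then 1 else 0 := by
      apply Finset.sum_congr rfl
      intro i _
      simp only [hLI i]
    have hTR : (∑ i : Fin n, if (∀ j : Fin (n+2), i.succ.succ < j → σ i.succ.succ < σ j)
        then 1 else 0) = ∑ i : Fin n, if (∀ j : Fin n, i < j → π i < π j) then 1 else 0 := by
      apply Finset.sum_congr rfl
      intro i _
      simp only [hRI i]
    rw [hTL, hTR]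
    omega
  rw [key, pow_add]
  have : (-1 : ℤ) ^ (2 * (if ρ 0 < ρ 1 then 1 else 0) + 2) = 1 := by
    rw [pow_add, pow_mul]
    norm_num
  rw [this, mul_one]

lemma Srec : S (n+2) = 2 * S n := by
  rw [S, ← Finset.sum_filter_add_sum_filter_not univ (fun σ : Equiv.Perm (Fin (n+2)) =>
    ((σ 0 : Fin (n+2)) : ℕ) < 2 ∧ ((σ 1 : Fin (n+2)) : ℕ) < 2)
    (fun σ => (-1 : ℤ) ^ stat (n+2) σ), cancel_sum, add_zero, filter_eq_image,
    Finset.sum_image (by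
      intro x _ y _ h
      have := E_inj x.1 y.1 x.2 y.2 h
      exact Prod.ext this.1 this.2)]
  have : ∀ x : Equiv.Perm (Fin 2) × Equiv.Perm (Fin n),
      (-1 : ℤ) ^ stat (n+2) (E x.1 x.2) = (-1 : ℤ) ^ stat n x.2 :=
    fun x => stat_E x.1 x.2
  rw [Finset.sum_congr rfl (fun x _ => this x), Fintype.sum_prod_type]
  have hconst : ∀ ρ : Equiv.Perm (Fin 2),
      (∑ π : Equiv.Perm (Fin n), (-1 : ℤ) ^ stat n π) = S n := fun _ => rfl
  rw [Finset.sum_congr rfl (fun ρ _ => hconst ρ), Finset.sum_const, Finset.card_univ,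
    Fintype.card_perm]
  simp [S]

lemma S0 : S 0 = 1 := by decide

lemma S1 : S 1 = 1 := by decide

lemma Sval : ∀ N : ℕ, S N = 2 ^ (N / 2)
  | 0 => by rw [S0]; norm_num
  | 1 => by rw [S1]; norm_num
  | (k+2) => by
    rw [Srec, Sval k, show (k+2)/2 = k/2 + 1 from by omega, pow_succ]
    ring

end LRRL

open LRRL

/-- The generating function of the sum of the numbers of left-to-right maxima
and right-to-left minima on `S_n` evaluated at `q = -1` equals `2^⌊n/2⌋`. -/
theorem lr_max_plus_rl_min_q_eq_neg_one (n : ℕ) (hn : 0 < n) :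
    ∑ σ : Equiv.Perm (Fin n),
      (-1 : ℤ) ^ ((univ.filter (fun i : Fin n => ∀ j : Fin n, j < i → σ j < σ i)).card +
                  (univ.filter (fun i : Fin n => ∀ j : Fin n, i < j → σ i < σ j)).card)
      = 2 ^ (n / 2) := by
  exact Sval n
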